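/- The 3×3 matrix A = [[0,1,1],[2,0,1],[-1,-1,0]] is a semimonotone star matrix, but A + Aᵀ = [[0,3,0],[3,0,0],[0,0,0]] is not a semimonotone star matrix. -/

import Mathlib

/-- A is semimonotone (E₀). -/
def IsSemimonotone {n : ℕ} (A : Matrix (Fin n) (Fin n) ℝ) : Prop :=
  ∀ x : Fin n → ℝ, 0 ≤ x → x ≠ 0 → ∃ i, 0 < x i ∧ 0 ≤ A.mulVec x i

/-- A is semimonotone star (E₀ˢ). -/
def IsSemimonotoneStar {n : ℕ} (A : Matrix (Fin n) (Fin n) ℝ) : Prop :=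
  IsSemimonotone A ∧
    ∀ x : Fin n → ℝ, 0 ≤ x → 0 ≤ A.mulVec x → dotProduct x (A.mulVec x) = 0 →
      A.transpose.mulVec x ≤ 0

theorem stmt4 :
    IsSemimonotoneStar !![(0 : ℝ), 1, 1; 2, 0, 1; -1, -1, 0] ∧
      (!![(0 : ℝ), 1, 1; 2, 0, 1; -1, -1, 0] +
        (!![(0 : ℝ), 1, 1; 2, 0, 1; -1, -1, 0]).transpose
          = !![(0 : ℝ), 3, 0; 3, 0, 0; 0, 0, 0]) ∧
      ¬ IsSemimonotoneStar !![(0 : ℝ), 3, 0; 3, 0, 0; 0, 0, 0] := by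
  refine ⟨⟨?_, ?_⟩, ?_, ?_⟩
  · intro x hx hne
    have h0 : (0:ℝ) ≤ x 0 := hx 0
    have h1 : (0:ℝ) ≤ x 1 := hx 1
    have h2 : (0:ℝ) ≤ x 2 := hx 2
    by_cases hx0 : 0 < x 0
    · refine ⟨0, hx0, ?_⟩
      simp [Matrix.mulVec, dotProduct, Fin.sum_univ_three]
      linarith
    · by_cases hx1 : 0 < x 1
      · refine ⟨1, hx1, ?_⟩
        simp [Matrix.mulVec, dotProduct, Fin.sum_univ_three]
        linarith
      · have e0 : x 0 = 0 := le_antisymm (not_lt.mp hx0) h0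
        have e1 : x 1 = 0 := le_antisymm (not_lt.mp hx1) h1
        have hx2 : 0 < x 2 := by
          rcases lt_or_eq_of_le h2 with h | h
          · exact h
          · exfalso; apply hne; funext i; fin_cases i <;> simp [e0, e1, ← h]
        refine ⟨2, hx2, ?_⟩
        simp [Matrix.mulVec, dotProduct, Fin.sum_univ_three]
        linarith
  · intro x hx hAx hdot
    have h0 : (0:ℝ) ≤ x 0 := hx 0
    have h1 : (0:ℝ) ≤ x 1 := hx 1
    have h2 : (0:ℝ) ≤ x 2 := hx 2
    have hA2 : (0:ℝ) ≤ -(x 0) - x 1 := by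
      have := hAx 2
      simpa [Matrix.mulVec, dotProduct, Fin.sum_univ_three] using this
    have e0 : x 0 = 0 := by linarith
    have e1 : x 1 = 0 := by linarith
    intro i
    fin_cases i <;>
      simp [Matrix.mulVec, dotProduct, Fin.sum_univ_three, e0, e1] <;> linarith
  · ext i j
    fin_cases i <;> fin_cases j <;>
      norm_num [Matrix.transpose_apply, Matrix.vecHead, Matrix.vecTail]
  · rintro ⟨-, hstar⟩
    have h := hstar ![1, 0, 0] (by intro i; fin_cases i <;> norm_num)
      (by intro i; fin_cases i <;> simp [Matrix.mulVec, dotProduct, Fin.sum_univ_three])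
      (by simp [Matrix.mulVec, dotProduct, Fin.sum_univ_three])
    have := h 1
    simp [Matrix.mulVec, dotProduct, Fin.sum_univ_three] at this
    linarith
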